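/- arXiv:math/0512568 — 8 statements merged into one kernel-verified Lean document; each statement's English description precedes it below -/
import Mathlib

section
/- Let G be a connected simple graph, let v be an internal vertex of G (v is not an end vertex and no end vertex of G is adjacent to v), and let H be a nonempty graph disjoint from G. Let F be the graph on V(G) ∪ V(H) whose edges are the edges of G, the edges of H, and an edge joining v to every vertex of H. If there exists a commutative semigroup S with zero such that Γ(S) is isomorphic to F, then there exists a commutative semigroup S′ with zero such that Γ(S′) is isomorphic to G. -/
universe u v w
/-- A commutative semigroup with a zero element `0` satisfying `0 * a = 0`. -/
class CommSemigroupWithZero (S : Type u) extends CommSemigroup S, Zero S where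
  zero_mul' : ∀ a : S, 0 * a = 0

/-- The zero-divisor graph of `S`, as a simple graph on all of `S`:
distinct nonzero `x, y` are adjacent iff `x * y = 0`.  (The element `0` and the
non-zero-divisors are isolated vertices, so adjacency, end vertices and cycles
are exactly those of `Γ(S)`.) -/
def zdGraph (S : Type u) [CommSemigroupWithZero S] : SimpleGraph S where
  Adj x y := x ≠ y ∧ x * y = 0 ∧ x ≠ 0 ∧ y ≠ 0
  symm := by
    constructor
    rintro x y ⟨h1, h2, h3, h4⟩
    exact ⟨h1.symm, by rwa [mul_comm], h4, h3⟩
  loopless := ⟨fun x h => h.1 rfl⟩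

/-- `x` is a vertex of `Γ(S)`: a nonzero zero-divisor. -/
def IsVertex (S : Type u) [CommSemigroupWithZero S] (x : S) : Prop :=
  x ≠ 0 ∧ ∃ y : S, y ≠ 0 ∧ x * y = 0

/-- `x` is an end vertex of `Γ(S)`: it has exactly one neighbour. -/
def IsEndVertex (S : Type u) [CommSemigroupWithZero S] (x : S) : Prop :=
  ∃! y : S, (zdGraph S).Adj x y
/-- The zero-divisor graph of `S` on its vertex set (the nonzero zero-divisors). -/
def zdvGraph (S : Type u) [CommSemigroupWithZero S] :
    SimpleGraph {x : S // x ≠ 0 ∧ ∃ y : S, y ≠ 0 ∧ x * y = 0} where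
  Adj a b := a ≠ b ∧ (a : S) * (b : S) = 0
  symm := by
    constructor
    rintro a b ⟨h1, h2⟩
    exact ⟨h1.symm, by rwa [mul_comm]⟩
  loopless := ⟨fun a h => h.1 rfl⟩

/-- `G` is (isomorphic to) the zero-divisor graph of some commutative semigroup with zero. -/
def IsZDGraphOf {α : Type v} (G : SimpleGraph α) : Prop :=
  ∃ (S : Type u) (inst : CommSemigroupWithZero S), Nonempty ((@zdvGraph S inst) ≃g G)

/-- `v` is an end vertex of the abstract graph `G`: it has exactly one neighbour. -/
def IsEndG {α : Type v} (G : SimpleGraph α) (v : α) : Prop := ∃! u, G.Adj v u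

/-- The graph obtained from `G` by attaching the (disjoint) graph `H` to the vertex `v`:
keep all edges of `G` and of `H` and join `v` to every vertex of `H`. -/
def attachGraph {α : Type v} {β : Type w} (G : SimpleGraph α) (H : SimpleGraph β) (v : α) :
    SimpleGraph (α ⊕ β) where
  Adj x y :=
    match x, y with
    | Sum.inl a, Sum.inl b => G.Adj a b
    | Sum.inl a, Sum.inr _ => a = v
    | Sum.inr _, Sum.inl a => a = v
    | Sum.inr a, Sum.inr b => H.Adj a b
  symm := by
    constructor
    rintro (a | a) (b | b) h
    · exact G.adj_symm h
    · exact h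
    · exact h
    · exact H.adj_symm h
  loopless := by
    constructor
    rintro (a | a) h
    · exact G.irrefl h
    · exact H.irrefl h

-- auxiliary decls to insert above theorem
lemma CSWZ.mul_zero'' {S : Type u} [CommSemigroupWithZero S] (a : S) : a * 0 = 0 := by
  rw [mul_comm]; exact CommSemigroupWithZero.zero_mul' a

/-- A multiplicatively closed subset containing `0` is again a comm. semigroup with zero. -/
def subCSWZ (S : Type u) [CommSemigroupWithZero S] (P : S → Prop) (h0 : P 0)
    (hmul : ∀ x y : S, P x → P y → P (x * y)) : CommSemigroupWithZero {s : S // P s} where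
  mul x y := ⟨x.1 * y.1, hmul _ _ x.2 y.2⟩
  mul_assoc x y z := Subtype.ext (mul_assoc x.1 y.1 z.1)
  mul_comm x y := Subtype.ext (mul_comm x.1 y.1)
  zero := ⟨0, h0⟩
  zero_mul' a := Subtype.ext (CommSemigroupWithZero.zero_mul' a.1)

/-- A two-element carrier for the null semigroup. -/
inductive TwoElt : Type u where
  | z : TwoElt
  | o : TwoElt

/-- The two-element null semigroup. -/
instance twoCSWZ : CommSemigroupWithZero TwoElt.{u} where
  mul _ _ := TwoElt.z
  mul_assoc _ _ _ := rfl
  mul_comm _ _ := rfl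
  zero := TwoElt.z
  zero_mul' _ := rfl

/-- Corollary 2.3: if `F` is obtained from `G` by attaching a nonempty graph `H` to an
internal vertex `v` of `G`, and `F` is the zero-divisor graph of some commutative semigroup
with zero, then so is `G`. -/
theorem stmt3 {α : Type v} {β : Type w} (G : SimpleGraph α) (H : SimpleGraph β)
    (hG : G.Connected) (hH : Nonempty β)
    (v : α) (hv1 : ¬ IsEndG G v) (hv2 : ∀ u : α, G.Adj v u → ¬ IsEndG G u)
    (hF : ∃ (S : Type u) (inst : CommSemigroupWithZero S),
      Nonempty ((@zdvGraph S inst) ≃g attachGraph G H v)) :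
    ∃ (S' : Type u) (inst : CommSemigroupWithZero S'),
      Nonempty ((@zdvGraph S' inst) ≃g G) := by
  classical
  obtain ⟨S, inst, ⟨e⟩⟩ := hF
  by_cases hex : ∃ u, G.Adj v u
  · -- main case : `v` has a neighbour in `G`
    obtain ⟨u0, hu0⟩ := hex
    have hnbr : ∀ a : α, ∃ b, G.Adj a b := by
      intro a
      by_cases ha : a = v
      · exact ha ▸ ⟨u0, hu0⟩
      · obtain ⟨w⟩ := hG.preconnected a v
        cases w with
        | nil => exact absurd rfl ha
        | cons h _ => exact ⟨_, h⟩
    set σ : α → S := fun a => ((e.symm (Sum.inl a)) : S) with hσdef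
    have hσV : ∀ a : α, σ a ≠ 0 ∧ ∃ y : S, y ≠ 0 ∧ σ a * y = 0 :=
      fun a => (e.symm (Sum.inl a)).2
    have hGadj : ∀ a b : α, G.Adj a b ↔ (a ≠ b ∧ σ a * σ b = 0) := by
      intro a b
      constructor
      · intro h
        have h2 : (zdvGraph S).Adj (e.symm (Sum.inl a)) (e.symm (Sum.inl b)) :=
          e.symm.map_adj_iff.2 (show (attachGraph G H v).Adj (Sum.inl a) (Sum.inl b) from h)
        exact ⟨h.ne, h2.2⟩
      · rintro ⟨hne, h0⟩
        have h2 : (zdvGraph S).Adj (e.symm (Sum.inl a)) (e.symm (Sum.inl b)) :=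
          ⟨fun hh => hne (Sum.inl.inj (e.symm.injective hh)), h0⟩
        exact e.symm.map_adj_iff.1 h2
    -- Claim A : a product of two `G`-elements is never an `H`-element
    have claimA : ∀ (a a' : α) (b : β), σ a * σ a' ≠ ((e.symm (Sum.inr b)) : S) := by
      intro a a' b h
      have key : ∀ u : α, G.Adj a u → u = v := by
        intro u hu
        have h1 : σ a * σ u = 0 := ((hGadj a u).1 hu).2
        have h2 : σ u * (σ a * σ a') = 0 := by
          rw [← mul_assoc, mul_comm (σ u) (σ a), h1, CommSemigroupWithZero.zero_mul']
        have hne : e.symm (Sum.inl u) ≠ e.symm (Sum.inr b) := by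
          intro hh
          exact absurd (e.symm.injective hh) (by simp)
        have hadj : (attachGraph G H v).Adj (Sum.inl u) (Sum.inr b) := by
          refine e.symm.map_adj_iff.1 ⟨hne, ?_⟩
          rw [← h]
          exact h2
        exact hadj
      by_cases hav : a = v
      · have h3 := key u0 (hav ▸ hu0)
        rw [h3] at hu0
        exact G.irrefl hu0
      · obtain ⟨u, hu⟩ := hnbr a
        have huv : u = v := key u hu
        rw [huv] at hu
        exact hv2 a hu.symm ⟨v, hu, fun y hy => key y hy⟩
    -- the subsemigroup on `{0} ∪ σ(α)`
    have hclosed : ∀ x y : S, (x = 0 ∨ ∃ a, σ a = x) → (y = 0 ∨ ∃ a, σ a = y) →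
        ((x * y = 0) ∨ ∃ a, σ a = x * y) := by
      rintro x y (rfl | ⟨a, rfl⟩) hy
      · exact Or.inl (CommSemigroupWithZero.zero_mul' y)
      rcases hy with rfl | ⟨a', rfl⟩
      · exact Or.inl (CSWZ.mul_zero'' _)
      by_cases h0 : σ a * σ a' = 0
      · exact Or.inl h0
      · right
        obtain ⟨-, z, hz0, hzz⟩ := hσV a'
        have hver : σ a * σ a' ≠ 0 ∧ ∃ y : S, y ≠ 0 ∧ (σ a * σ a') * y = 0 :=
          ⟨h0, z, hz0, by rw [mul_assoc, hzz, CSWZ.mul_zero'']⟩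
        rcases hsum : e ⟨σ a * σ a', hver⟩ with c | b
        · refine ⟨c, ?_⟩
          have h5 : e.symm (Sum.inl c) = ⟨σ a * σ a', hver⟩ := by
            rw [← hsum]; exact e.symm_apply_apply _
          exact congrArg Subtype.val h5
        · exfalso
          have h5 : e.symm (Sum.inr b) = ⟨σ a * σ a', hver⟩ := by
            rw [← hsum]; exact e.symm_apply_apply _
          exact claimA a a' b (congrArg Subtype.val h5).symm
    set T := {s : S // s = 0 ∨ ∃ a, σ a = s} with hTdef
    letI instT : CommSemigroupWithZero T :=
      subCSWZ S (fun s => s = 0 ∨ ∃ a, σ a = s) (Or.inl rfl) hclosed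
    have hzeroT : ((0 : T) : S) = 0 := rfl
    have hmulT : ∀ x y : T, ((x * y : T) : S) = (x : S) * (y : S) := fun _ _ => rfl
    -- every `σ a` is a vertex of `T`
    have hel : ∀ a : α, ∃ t : T, (t : S) = σ a ∧ (t ≠ 0 ∧ ∃ y : T, y ≠ 0 ∧ t * y = 0) := by
      intro a
      obtain ⟨c, hc⟩ := hnbr a
      refine ⟨⟨σ a, Or.inr ⟨a, rfl⟩⟩, rfl, ?_, ⟨σ c, Or.inr ⟨c, rfl⟩⟩, ?_, ?_⟩
      · intro hh
        apply (hσV a).1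
        rw [← hzeroT]
        exact congrArg Subtype.val hh
      · intro hh
        apply (hσV c).1
        rw [← hzeroT]
        exact congrArg Subtype.val hh
      · apply Subtype.ext
        rw [hmulT, hzeroT]
        exact ((hGadj a c).1 hc).2
    -- every vertex of `T` is some `σ a`
    have hPex : ∀ t : {x : T // x ≠ 0 ∧ ∃ y : T, y ≠ 0 ∧ x * y = 0}, ∃ a, σ a = ((t : T) : S) := by
      rintro ⟨⟨s, hs⟩, ht0, -⟩
      refine hs.resolve_left ?_
      intro h00
      refine ht0 (Subtype.ext ?_)
      rw [hzeroT]
      exact h00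
    have hσinj : ∀ a b : α, σ a = σ b → a = b := by
      intro a b h
      exact Sum.inl.inj (e.symm.injective (Subtype.ext h))
    refine ⟨T, instT, ⟨?_⟩⟩
    exact {
      toFun := fun t => (hPex t).choose
      invFun := fun a => ⟨(hel a).choose, (hel a).choose_spec.2⟩
      left_inv := by
        intro t
        apply Subtype.ext
        apply Subtype.ext
        show ((hel _).choose : S) = _
        rw [(hel _).choose_spec.1]
        exact (hPex t).choose_spec
      right_inv := by
        intro a
        refine hσinj _ _ ?_
        rw [(hPex _).choose_spec]
        exact (hel a).choose_spec.1
      map_rel_iff' := by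
        intro t t'
        rw [hGadj]
        constructor
        · rintro ⟨hne, h0⟩
          refine ⟨?_, ?_⟩
          · intro hh
            exact hne (by rw [hh])
          · apply Subtype.ext
            rw [hmulT, hzeroT, ← (hPex t).choose_spec, ← (hPex t').choose_spec]
            exact h0
        · rintro ⟨hne, h0⟩
          refine ⟨?_, ?_⟩
          · intro hh
            refine hne (Subtype.ext (Subtype.ext ?_))
            rw [← (hPex t).choose_spec, ← (hPex t').choose_spec]
            exact congrArg σ hh
          · show σ ((hPex t).choose) * σ ((hPex t').choose) = 0
            rw [(hPex t).choose_spec, (hPex t').choose_spec]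
            have h6 := congrArg Subtype.val h0
            rw [hmulT, hzeroT] at h6
            exact h6 }
  · -- degenerate case : `G` is a single vertex
    have hall : ∀ a : α, a = v := by
      intro a
      obtain ⟨w⟩ := hG.preconnected v a
      cases w with
      | nil => rfl
      | cons h _ => exact absurd ⟨_, h⟩ hex
    have htne : (TwoElt.o : TwoElt.{u}) ≠ 0 := fun h => TwoElt.noConfusion h
    have hvert : (TwoElt.o : TwoElt.{u}) ≠ 0 ∧
        ∃ y : TwoElt.{u}, y ≠ 0 ∧ (TwoElt.o : TwoElt.{u}) * y = 0 :=
      ⟨htne, TwoElt.o, htne, rfl⟩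
    have huniq : ∀ x : {x : TwoElt.{u} // x ≠ 0 ∧ ∃ y : TwoElt.{u}, y ≠ 0 ∧ x * y = 0},
        x = ⟨TwoElt.o, hvert⟩ := by
      rintro ⟨(_ | _), hb, -⟩
      · exact absurd rfl hb
      · rfl
    refine ⟨TwoElt.{u}, twoCSWZ.{u}, ⟨?_⟩⟩
    exact {
      toFun := fun _ => v
      invFun := fun _ => ⟨TwoElt.o, hvert⟩
      left_inv := fun x => (huniq x).symm
      right_inv := fun a => (hall a).symm
      map_rel_iff' := by
        intro x y
        constructor
        · intro h
          exact absurd h G.irrefl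
        · rintro ⟨hne, -⟩
          exact absurd ((huniq x).trans (huniq y).symm) hne }
end

section
/- For integers n and k with n ≥ k ≥ 4, let M_{n,k} be the graph with vertex set {a_1, …, a_n} ∪ {x_1, …, x_k}, where the a_i span a complete graph K_n, each x_i (1 ≤ i ≤ k) is adjacent exactly to a_i, and there are no other edges. Then there is no commutative semigroup S with zero such that Γ(S) is isomorphic to M_{n,k}. -/
universe u v w
/-- The graph `M_{n,k}` : a complete graph on `a_1, …, a_n` (the `Sum.inl` vertices)
together with end vertices `x_1, …, x_k` (the `Sum.inr` vertices), where `x_i` is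
adjacent exactly to `a_i`. -/
def Mgraph (n k : ℕ) : SimpleGraph (Fin n ⊕ Fin k) where
  Adj x y :=
    match x, y with
    | Sum.inl i, Sum.inl j => i ≠ j
    | Sum.inl i, Sum.inr j => (i : ℕ) = (j : ℕ)
    | Sum.inr j, Sum.inl i => (i : ℕ) = (j : ℕ)
    | Sum.inr _, Sum.inr _ => False
  symm := by
    constructor
    rintro (i | i) (j | j) h
    · exact h.symm
    · exact h
    · exact h
    · exact h.elim
  loopless := by
    constructor
    rintro (i | i) h
    · exact h rfl
    · exact h

/-- Example 2.4: for `n ≥ k ≥ 4`, the graph `M_{n,k}` has no corresponding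
zero-divisor semigroup. -/
theorem stmt4 (n k : ℕ) (hk : 4 ≤ k) (hn : k ≤ n) : ¬ IsZDGraphOf (Mgraph n k) := by
  rintro ⟨S, inst, ⟨e⟩⟩
  have zmul : ∀ s : S, (0 : S) * s = 0 := CommSemigroupWithZero.zero_mul'
  have mulz : ∀ s : S, s * 0 = 0 := fun s => by rw [mul_comm]; exact zmul s
  set f := e.symm with hf
  let a : Fin n → S := fun i => (f (Sum.inl i)).1
  let x : Fin k → S := fun j => (f (Sum.inr j)).1
  have ha0 : ∀ i, a i ≠ 0 := fun i => (f (Sum.inl i)).2.1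
  have hx0 : ∀ j, x j ≠ 0 := fun j => (f (Sum.inr j)).2.1
  have hinj : ∀ u v, (f u).1 = (f v).1 → u = v := fun u v h =>
    f.toEquiv.injective (Subtype.ext h)
  have adj : ∀ u v, (zdvGraph S).Adj (f u) (f v) ↔ (Mgraph n k).Adj u v :=
    fun u v => f.map_adj_iff
  -- products of distinct a's are zero
  have h1 : ∀ i j : Fin n, i ≠ j → a i * a j = 0 :=
    fun i j hij => ((adj (Sum.inl i) (Sum.inl j)).2 hij).2
  -- a_{j} * x_j = 0
  have h2 : ∀ j : Fin k, a (Fin.castLE hn j) * x j = 0 := by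
    intro j
    refine ((adj (Sum.inl (Fin.castLE hn j)) (Sum.inr j)).2 ?_).2
    show ((Fin.castLE hn j : Fin n) : ℕ) = (j : ℕ)
    rfl
  -- castLE is injective
  have castinj : ∀ i j : Fin k, Fin.castLE hn i = Fin.castLE hn j → i = j := by
    intro i j h
    exact Fin.ext (by simpa using congrArg Fin.val h)
  -- every nonzero zero-divisor is a vertex
  have hclass : ∀ s : S, s ≠ 0 → ∀ w : S, w ≠ 0 → s * w = 0 →
      ∃ u, s = (f u).1 := by
    intro s hs w hw hsw
    exact ⟨e ⟨s, hs, w, hw, hsw⟩, congrArg Subtype.val (e.symm_apply_apply ⟨s, hs, w, hw, hsw⟩).symm⟩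
  -- anything nonzero killing x j is x j or a j
  have h3 : ∀ s : S, s ≠ 0 → ∀ j : Fin k, s * x j = 0 →
      s = x j ∨ s = a (Fin.castLE hn j) := by
    intro s hs j hsx
    obtain ⟨u, rfl⟩ := hclass s hs (x j) (hx0 j) hsx
    match u with
    | Sum.inr l =>
      left
      by_contra hne
      have hadj : (zdvGraph S).Adj (f (Sum.inr l)) (f (Sum.inr j)) :=
        ⟨fun h => hne (congrArg Subtype.val h), hsx⟩
      exact (adj _ _).1 hadj
    | Sum.inl m =>
      right
      have hne : (f (Sum.inl m)).1 ≠ x j := fun h => by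
        cases hinj _ _ h
      have hadj : (zdvGraph S).Adj (f (Sum.inl m)) (f (Sum.inr j)) :=
        ⟨fun h => hne (congrArg Subtype.val h), hsx⟩
      have : (m : ℕ) = (j : ℕ) := (adj _ _).1 hadj
      have : m = Fin.castLE hn j := Fin.ext (by simpa using this)
      rw [this]
  -- anything nonzero killing two distinct a's is an a
  have h4 : ∀ s : S, s ≠ 0 → ∀ i j : Fin n, i ≠ j → s * a i = 0 → s * a j = 0 →
      ∃ m : Fin n, s = a m := by
    intro s hs i j hij hi hj
    obtain ⟨u, rfl⟩ := hclass s hs (a i) (ha0 i) hi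
    match u with
    | Sum.inl m => exact ⟨m, rfl⟩
    | Sum.inr l =>
      exfalso
      have hne1 : (f (Sum.inr l)).1 ≠ a i := fun h => by cases hinj _ _ h
      have hne2 : (f (Sum.inr l)).1 ≠ a j := fun h => by cases hinj _ _ h
      have hadj1 : (zdvGraph S).Adj (f (Sum.inr l)) (f (Sum.inl i)) :=
        ⟨fun h => hne1 (congrArg Subtype.val h), hi⟩
      have hadj2 : (zdvGraph S).Adj (f (Sum.inr l)) (f (Sum.inl j)) :=
        ⟨fun h => hne2 (congrArg Subtype.val h), hj⟩
      have e1 : (i : ℕ) = (l : ℕ) := (adj _ _).1 hadj1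
      have e2 : (j : ℕ) = (l : ℕ) := (adj _ _).1 hadj2
      exact hij (Fin.ext (e1.trans e2.symm))
  -- x_i and a_j are never adjacent for i ≠ j
  have hnadj : ∀ (i j : Fin k), i ≠ j → x i * a (Fin.castLE hn j) ≠ 0 := by
    intro i j hij h0
    have hne : x i ≠ a (Fin.castLE hn j) := fun h => by cases hinj _ _ h
    have hadj : (zdvGraph S).Adj (f (Sum.inr i)) (f (Sum.inl (Fin.castLE hn j))) :=
      ⟨fun h => hne (congrArg Subtype.val h), h0⟩
    have : ((Fin.castLE hn j : Fin n) : ℕ) = (i : ℕ) := (adj _ _).1 hadj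
    exact hij (Fin.ext (by simpa using this.symm))
  -- key lemma: x_i * a_j = a_j for i ≠ j
  have L : ∀ i j : Fin k, i ≠ j →
      x i * a (Fin.castLE hn j) = a (Fin.castLE hn j) := by
    intro i j hij
    have hd0 : x i * a (Fin.castLE hn j) ≠ 0 := hnadj i j hij
    have hd : (x i * a (Fin.castLE hn j)) * x j = 0 := by
      rw [mul_assoc, h2 j, mulz]
    rcases h3 _ hd0 j hd with h | h
    · exfalso
      have hx0' : x j * a (Fin.castLE hn i) = 0 := by
        rw [← h, mul_assoc,
          h1 (Fin.castLE hn j) (Fin.castLE hn i)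
            (fun hc => hij (castinj _ _ hc).symm), mulz]
      exact hnadj j i hij.symm hx0'
    · exact h
  -- now the contradiction using indices 0,1,2,3
  have h4k : ∀ m : ℕ, m < 4 → m < k := fun m hm => lt_of_lt_of_le hm hk
  let i0 : Fin k := ⟨0, h4k 0 (by norm_num)⟩
  let i1 : Fin k := ⟨1, h4k 1 (by norm_num)⟩
  let i2 : Fin k := ⟨2, h4k 2 (by norm_num)⟩
  let i3 : Fin k := ⟨3, h4k 3 (by norm_num)⟩
  have ne01 : i0 ≠ i1 := fun h => by simpa [i0, i1, Fin.ext_iff] using h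
  have ne02 : i0 ≠ i2 := fun h => by simpa [i0, i2, Fin.ext_iff] using h
  have ne03 : i0 ≠ i3 := fun h => by simpa [i0, i3, Fin.ext_iff] using h
  have ne12 : i1 ≠ i2 := fun h => by simpa [i1, i2, Fin.ext_iff] using h
  have ne13 : i1 ≠ i3 := fun h => by simpa [i1, i3, Fin.ext_iff] using h
  have ne23 : i2 ≠ i3 := fun h => by simpa [i2, i3, Fin.ext_iff] using h
  have hc0 : x i0 * x i1 ≠ 0 := by
    intro h0
    have hne : x i0 ≠ x i1 := fun h => ne01 (Sum.inr.inj (hinj _ _ h))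
    have hadj : (zdvGraph S).Adj (f (Sum.inr i0)) (f (Sum.inr i1)) :=
      ⟨fun h => hne (congrArg Subtype.val h), h0⟩
    exact (adj _ _).1 hadj
  have hc1 : (x i0 * x i1) * a (Fin.castLE hn i0) = 0 := by
    rw [mul_comm (x i0) (x i1), mul_assoc]
    rw [mul_comm (x i0) (a (Fin.castLE hn i0)), h2 i0, mulz]
  have hc2 : (x i0 * x i1) * a (Fin.castLE hn i1) = 0 := by
    rw [mul_assoc, mul_comm (x i1) (a (Fin.castLE hn i1)), h2 i1, mulz]
  obtain ⟨m, hm⟩ := h4 _ hc0 (Fin.castLE hn i0) (Fin.castLE hn i1)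
    (fun h => ne01 (castinj _ _ h)) hc1 hc2
  have hc3 : (x i0 * x i1) * a (Fin.castLE hn i2) = a (Fin.castLE hn i2) := by
    rw [mul_assoc, L i1 i2 ne12, L i0 i2 ne02]
  have hc4 : (x i0 * x i1) * a (Fin.castLE hn i3) = a (Fin.castLE hn i3) := by
    rw [mul_assoc, L i1 i3 ne13, L i0 i3 ne03]
  have hm2 : m = Fin.castLE hn i2 := by
    by_contra hne
    have := h1 m (Fin.castLE hn i2) hne
    rw [← hm] at this
    exact ha0 _ (hc3 ▸ this)
  have hm3 : m = Fin.castLE hn i3 := by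
    by_contra hne
    have := h1 m (Fin.castLE hn i3) hne
    rw [← hm] at this
    exact ha0 _ (hc4 ▸ this)
  have : i2 = i3 := castinj _ _ (hm2 ▸ hm3)
  exact ne23 this
end

section
/- Let G₀ be the graph with vertex set {a₁, a₂, a₃, x₁, x₂} and edges a₁a₂, a₁a₃, a₂a₃, a₁x₁, a₂x₂, x₁x₂. Let H be a graph obtained from G₀ by attaching pairwise disjoint sets U₁, U₂, U₃, U₄, U₅ of new end vertices to the vertices a₁, a₂, a₃, x₁, x₂ respectively (each new vertex adjacent only to the vertex it is attached to). If U₃ ∪ U₄ ∪ U₅ is nonempty, then there is no commutative semigroup S with zero such that Γ(S) is isomorphic to H. -/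
universe u v w
/-- The edge relation of the base graph `G₀` on vertices `a₁ = 0, a₂ = 1, a₃ = 2,
x₁ = 3, x₂ = 4` (oriented version). Edges: a₁a₂, a₁a₃, a₂a₃, a₁x₁, a₂x₂, x₁x₂. -/
def eAdj (i j : Fin 5) : Prop :=
  (i = 0 ∧ j = 1) ∨ (i = 0 ∧ j = 2) ∨ (i = 1 ∧ j = 2) ∨
  (i = 0 ∧ j = 3) ∨ (i = 1 ∧ j = 4) ∨ (i = 3 ∧ j = 4)

/-- The (symmetrized) adjacency relation of `G₀`. -/
def baseAdj (i j : Fin 5) : Prop := eAdj i j ∨ eAdj j i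

/-- The graph obtained from `G₀` by attaching, for each `i : Fin 5`, the set `U i` of new
end vertices to the `i`-th vertex of `G₀` (each new vertex adjacent only to that vertex).
Here `U 0, U 1, U 2, U 3, U 4` are the sets attached to `a₁, a₂, a₃, x₁, x₂`. -/
def Hgraph (U : Fin 5 → Type u) : SimpleGraph (Fin 5 ⊕ (Σ i, U i)) where
  Adj x y :=
    match x, y with
    | Sum.inl i, Sum.inl j => baseAdj i j
    | Sum.inl i, Sum.inr p => i = p.1
    | Sum.inr p, Sum.inl i => i = p.1
    | Sum.inr _, Sum.inr _ => False
  symm := by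
    constructor
    rintro (i | p) (j | q) h
    · exact Or.symm h
    · exact h
    · exact h
    · exact h.elim
  loopless := by
    constructor
    rintro (i | p) h
    · rcases h with h | h <;>
        rcases h with ⟨rfl, h⟩ | ⟨rfl, h⟩ | ⟨rfl, h⟩ | ⟨rfl, h⟩ | ⟨rfl, h⟩ | ⟨rfl, h⟩ <;>
        exact absurd h (by decide)
    · exact h


instance eAdj.instDecidable (i j : Fin 5) : Decidable (eAdj i j) := by
  unfold eAdj; infer_instance

instance baseAdj.instDecidable (i j : Fin 5) : Decidable (baseAdj i j) := by
  unfold baseAdj; infer_instance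

lemma Hgraph_adj_inl_inl {U : Fin 5 → Type u} {i j : Fin 5} :
    (Hgraph U).Adj (Sum.inl i) (Sum.inl j) ↔ baseAdj i j := Iff.rfl

lemma Hgraph_adj_inl_inr {U : Fin 5 → Type u} {i : Fin 5} {p : Σ i, U i} :
    (Hgraph U).Adj (Sum.inl i) (Sum.inr p) ↔ i = p.1 := Iff.rfl

lemma Hgraph_adj_inr_inl {U : Fin 5 → Type u} {i : Fin 5} {p : Σ i, U i} :
    (Hgraph U).Adj (Sum.inr p) (Sum.inl i) ↔ i = p.1 := Iff.rfl

lemma Hgraph_adj_inr_inr {U : Fin 5 → Type u} {p q : Σ i, U i} :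
    (Hgraph U).Adj (Sum.inr p) (Sum.inr q) ↔ False := Iff.rfl

/-- Example 2.5(2): if any end vertices are attached to `a₃`, `x₁` or `x₂`, the resulting
graph has no corresponding zero-divisor semigroup. -/
theorem stmt6 (U : Fin 5 → Type u)
    (hne : Nonempty (U 2) ∨ Nonempty (U 3) ∨ Nonempty (U 4)) :
    ¬ IsZDGraphOf (Hgraph U) := by
  rintro ⟨S, inst, ⟨φ⟩⟩
  set ψ : Hgraph U ≃g zdvGraph S := φ.symm with hψdef
  -- transfer of adjacency
  have adj_of : ∀ p q : Fin 5 ⊕ (Σ i, U i), (Hgraph U).Adj p q →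
      ((ψ p : S) * (ψ q : S) = 0) := fun p q h => ((ψ.map_adj_iff).2 h).2
  have adj_to : ∀ p q : Fin 5 ⊕ (Σ i, U i), p ≠ q →
      ((ψ p : S) * (ψ q : S) = 0) → (Hgraph U).Adj p q := by
    intro p q hpq h
    exact (ψ.map_adj_iff).1 ⟨fun he => hpq (ψ.toEquiv.injective he), h⟩
  -- the closed-neighbourhood lemma for a product of two non-adjacent vertices
  have key : ∀ p q : Fin 5 ⊕ (Σ i, U i), p ≠ q → ¬ (Hgraph U).Adj p q →
      ∃ w : Fin 5 ⊕ (Σ i, U i), ∀ r : Fin 5 ⊕ (Σ i, U i),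
        ((Hgraph U).Adj r p ∨ (Hgraph U).Adj r q) →
        r = w ∨ (Hgraph U).Adj r w := by
    intro p q hpq hnadj
    set t : S := (ψ p : S) * (ψ q : S) with ht
    have htne : t ≠ 0 := fun h0 => hnadj (adj_to p q hpq h0)
    obtain ⟨y, hy0, hy⟩ := (ψ p).2.2
    have htzd : ∃ y : S, y ≠ 0 ∧ t * y = 0 := by
      refine ⟨y, hy0, ?_⟩
      calc t * y = ((ψ p : S) * y) * (ψ q : S) := by
            rw [ht]; rw [mul_comm ((ψ p : S)) ((ψ q : S))]; rw [mul_assoc]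
            rw [mul_comm (ψ q : S)]
        _ = 0 := by rw [hy, CommSemigroupWithZero.zero_mul']
    set T : {x : S // x ≠ 0 ∧ ∃ y : S, y ≠ 0 ∧ x * y = 0} := ⟨t, htne, htzd⟩ with hT
    refine ⟨φ T, ?_⟩
    intro r hr
    have hrt : (ψ r : S) * t = 0 := by
      rcases hr with hr | hr
      · have := adj_of r p hr
        rw [ht, ← mul_assoc, this, CommSemigroupWithZero.zero_mul']
      · have := adj_of r q hr
        rw [ht, mul_comm (ψ p : S), ← mul_assoc, this,
          CommSemigroupWithZero.zero_mul']
    by_cases hrT : ψ r = T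
    · left
      have : φ (ψ r) = φ T := by rw [hrT]
      rwa [hψdef, RelIso.apply_symm_apply] at this
    · right
      have hadj : (zdvGraph S).Adj (ψ r) T := ⟨hrT, hrt⟩
      have := (φ.map_adj_iff).2 hadj
      rwa [hψdef, RelIso.apply_symm_apply] at this
  obtain he | he | he := hne <;> [obtain ⟨e⟩ := he; obtain ⟨e⟩ := he; obtain ⟨e⟩ := he]
  · -- an end vertex attached to a₃: use t = a₃ · x₁
    obtain ⟨w, hw⟩ := key (Sum.inl 2) (Sum.inl 3) (by simp)
      (fun h => absurd (Hgraph_adj_inl_inl.1 h) (by decide))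
    have h4 := hw (Sum.inl 4) (Or.inr (Hgraph_adj_inl_inl.2 (by decide)))
    have hE := hw (Sum.inr ⟨2, e⟩) (Or.inl (Hgraph_adj_inr_inl.2 rfl))
    rcases w with k | e'
    · have hk : k = (2 : Fin 5) := by
        rcases hE with hE | hE
        · exact absurd hE Sum.inr_ne_inl
        · exact Hgraph_adj_inr_inl.1 hE
      subst hk
      rcases h4 with h4 | h4
      · exact absurd (Sum.inl_injective h4) (by decide)
      · exact absurd (Hgraph_adj_inl_inl.1 h4) (by decide)
    · have he' : e' = ⟨2, e⟩ := by
        rcases hE with hE | hE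
        · exact (Sum.inr_injective hE).symm
        · exact absurd hE (Hgraph_adj_inr_inr.1)
      subst he'
      rcases h4 with h4 | h4
      · exact absurd h4 Sum.inl_ne_inr
      · exact (by decide : ¬(4:Fin 5) = 2) (Hgraph_adj_inl_inr.1 h4)
  · -- an end vertex attached to x₁: use t = a₃ · x₁
    obtain ⟨w, hw⟩ := key (Sum.inl 2) (Sum.inl 3) (by simp)
      (fun h => absurd (Hgraph_adj_inl_inl.1 h) (by decide))
    have hB := hw (Sum.inl 1) (Or.inl (Hgraph_adj_inl_inl.2 (by decide)))
    have hE := hw (Sum.inr ⟨3, e⟩) (Or.inr (Hgraph_adj_inr_inl.2 rfl))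
    rcases w with k | e'
    · have hk : k = (3 : Fin 5) := by
        rcases hE with hE | hE
        · exact absurd hE Sum.inr_ne_inl
        · exact Hgraph_adj_inr_inl.1 hE
      subst hk
      rcases hB with hB | hB
      · exact absurd (Sum.inl_injective hB) (by decide)
      · exact absurd (Hgraph_adj_inl_inl.1 hB) (by decide)
    · have he' : e' = ⟨3, e⟩ := by
        rcases hE with hE | hE
        · exact (Sum.inr_injective hE).symm
        · exact absurd hE (Hgraph_adj_inr_inr.1)
      subst he'
      rcases hB with hB | hB
      · exact absurd hB Sum.inl_ne_inr
      · exact (by decide : ¬(1:Fin 5) = 3) (Hgraph_adj_inl_inr.1 hB)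
  · -- an end vertex attached to x₂: use t = a₃ · x₂
    obtain ⟨w, hw⟩ := key (Sum.inl 2) (Sum.inl 4) (by simp)
      (fun h => absurd (Hgraph_adj_inl_inl.1 h) (by decide))
    have hA := hw (Sum.inl 0) (Or.inl (Hgraph_adj_inl_inl.2 (by decide)))
    have hE := hw (Sum.inr ⟨4, e⟩) (Or.inr (Hgraph_adj_inr_inl.2 rfl))
    rcases w with k | e'
    · have hk : k = (4 : Fin 5) := by
        rcases hE with hE | hE
        · exact absurd hE Sum.inr_ne_inl
        · exact Hgraph_adj_inr_inl.1 hE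
      subst hk
      rcases hA with hA | hA
      · exact absurd (Sum.inl_injective hA) (by decide)
      · exact absurd (Hgraph_adj_inl_inl.1 hA) (by decide)
    · have he' : e' = ⟨4, e⟩ := by
        rcases hE with hE | hE
        · exact (Sum.inr_injective hE).symm
        · exact absurd hE (Hgraph_adj_inr_inr.1)
      subst he'
      rcases hA with hA | hA
      · exact absurd hA Sum.inl_ne_inr
      · exact (by decide : ¬(0:Fin 5) = 4) (Hgraph_adj_inl_inr.1 hA)
end

section
/- Let S be a finite commutative semigroup with zero and let s be a vertex of Γ(S) whose degree m is maximal among the degrees of all vertices of Γ(S). Assume Γ(S) is m-uniquely determined: for any vertices x, y of Γ(S) with |N(x)| = |N(y)| = m, N(x) = N(y) implies x = y. If s·s = s, then {0, s} is an ideal of S, i.e., s·a ∈ {0, s} for every a ∈ S. -/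
universe u v w
/-- Proposition 2.10: let `S` be a finite semigroup, `s` a vertex of `Γ(S)` of maximal
degree `m`, and suppose `Γ(S)` is `m`-uniquely determined.  If `s * s = s`, then `{0, s}`
is an ideal of `S`. -/
theorem stmt11 (S : Type u) [CommSemigroupWithZero S] [Finite S]
    (s : S) (hs : IsVertex S s) (m : ℕ)
    (hm : ((zdGraph S).neighborSet s).ncard = m)
    (hmax : ∀ y : S, IsVertex S y → ((zdGraph S).neighborSet y).ncard ≤ m)
    (hud : ∀ x y : S, IsVertex S x → IsVertex S y →
      ((zdGraph S).neighborSet x).ncard = m → ((zdGraph S).neighborSet y).ncard = m →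
      (zdGraph S).neighborSet x = (zdGraph S).neighborSet y → x = y)
    (hss : s * s = s) :
    ∀ a : S, s * a = 0 ∨ s * a = s := by
  intro a
  by_cases h0 : s * a = 0
  · exact Or.inl h0
  right
  by_contra hts
  set t := s * a with ht
  obtain ⟨hs0, y, hy0, hsy⟩ := hs
  have hst : s * t = t := by
    rw [ht, ← mul_assoc, hss]
  have hty : t * y = 0 := by
    rw [ht, mul_comm s a, mul_assoc, hsy, mul_comm, CommSemigroupWithZero.zero_mul']
  have htv : IsVertex S t := ⟨h0, y, hy0, hty⟩
  have hsub : (zdGraph S).neighborSet s ⊆ (zdGraph S).neighborSet t := by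
    intro x hx
    obtain ⟨hne, hmul, _, hx0⟩ := hx
    have htx : t * x = 0 := by
      rw [ht, mul_comm s a, mul_assoc, hmul, mul_comm, CommSemigroupWithZero.zero_mul']
    refine ⟨?_, htx, h0, hx0⟩
    intro h
    exact h0 (by rw [← hst, h, hmul])
  have hle : ((zdGraph S).neighborSet t).ncard ≤ m := hmax t htv
  have hge : m ≤ ((zdGraph S).neighborSet t).ncard := by
    rw [← hm]
    exact Set.ncard_le_ncard hsub (Set.toFinite _)
  have heq : ((zdGraph S).neighborSet t).ncard = m := le_antisymm hle hge
  have hset : (zdGraph S).neighborSet s = (zdGraph S).neighborSet t :=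
    Set.eq_of_subset_of_ncard_le hsub (by rw [heq, hm]) (Set.toFinite _)
  exact hts ((hud s t ⟨hs0, y, hy0, hsy⟩ htv hm heq hset).symm)
end

section
/- For every integer r ≥ 2 and every family A₁, …, A_r of nonempty pairwise disjoint sets, there exists a commutative semigroup S with zero in which every element is idempotent (a Boolean semigroup) such that Γ(S) is isomorphic to the complete r-partite graph with parts A₁, …, A_r (two vertices adjacent if and only if they lie in different parts). -/
universe u v w
section Aux

variable {r : ℕ} {A : Fin r → Type u}

/-- The carrier of the semigroup: the disjoint union of the parts, plus a zero. -/
abbrev PSemi (A : Fin r → Type u) : Type u := Option (Σ i, A i)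

variable [LinearOrder (Σ i, A i)]

/-- Multiplication: zero absorbs; same-part elements multiply to their min;
different-part elements multiply to zero. -/
def pmul : PSemi A → PSemi A → PSemi A
  | none, _ => none
  | some _, none => none
  | some a, some b => if a.1 = b.1 then some (min a b) else none

lemma pmul_none (x : PSemi A) : pmul x none = none := by cases x <;> rfl

lemma fst_min (a b : Σ i, A i) (h : a.1 = b.1) : (min a b).1 = a.1 := by
  rcases min_choice a b with h' | h' <;> rw [h']
  exact h.symm

lemma pmul_comm (x y : PSemi A) : pmul x y = pmul y x := by
  cases x with
  | none => cases y <;> rfl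
  | some a =>
    cases y with
    | none => rfl
    | some b =>
      simp only [pmul]
      by_cases h : a.1 = b.1
      · rw [if_pos h, if_pos h.symm, min_comm]
      · rw [if_neg h, if_neg (fun hh => h hh.symm)]

lemma pmul_assoc (x y z : PSemi A) : pmul (pmul x y) z = pmul x (pmul y z) := by
  cases x with
  | none => rfl
  | some a =>
    cases y with
    | none => cases z <;> rfl
    | some b =>
      cases z with
      | none => rw [pmul_none, pmul_none, pmul_none]
      | some c =>
        show pmul (if a.1 = b.1 then some (min a b) else none) (some c)
            = pmul (some a) (if b.1 = c.1 then some (min b c) else none)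
        by_cases hab : a.1 = b.1
        · by_cases hbc : b.1 = c.1
          · rw [if_pos hab, if_pos hbc]
            show (if (min a b).1 = c.1 then _ else _)
                = (if a.1 = (min b c).1 then _ else _)
            rw [if_pos ((fst_min a b hab).trans (hab.trans hbc)),
              if_pos (hab.trans (fst_min b c hbc).symm), min_assoc]
          · rw [if_pos hab, if_neg hbc, pmul_none]
            show (if (min a b).1 = c.1 then _ else _) = (none : PSemi A)
            rw [if_neg (by rw [fst_min a b hab, hab]; exact hbc)]
        · rw [if_neg hab]
          by_cases hbc : b.1 = c.1
          · rw [if_pos hbc]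
            show (none : PSemi A)
                = (if a.1 = (min b c).1 then _ else _)
            rw [if_neg (by rw [fst_min b c hbc]; exact hab)]
          · rw [if_neg hbc, pmul_none]
            rfl

noncomputable instance instPSemi : CommSemigroupWithZero (PSemi A) where
  mul := pmul
  mul_comm := pmul_comm
  mul_assoc := pmul_assoc
  zero := none
  zero_mul' _ := rfl

lemma pmul_self (x : PSemi A) : x * x = x := by
  cases x with
  | none => rfl
  | some a => show pmul _ _ = _; simp [pmul]

lemma pmul_ne_fst {a b : Σ i, A i} (h : a.1 ≠ b.1) :
    (some a : PSemi A) * some b = 0 := by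
  show pmul _ _ = none
  simp [pmul, h]

lemma pmul_eq_fst {a b : Σ i, A i} (h : a.1 = b.1) :
    (some a : PSemi A) * some b = some (min a b) := by
  show pmul _ _ = _
  simp [pmul, h]

end Aux

/-- Proposition 3.1: for `r ≥ 2` and nonempty pairwise disjoint sets `A 0, …, A (r-1)`
(modelled as a family of nonempty types), there is a Boolean semigroup whose zero-divisor
graph is the complete `r`-partite graph with parts `A 0, …, A (r-1)`. -/
theorem stmt12 (r : ℕ) (hr : 2 ≤ r) (A : Fin r → Type u) (hA : ∀ i, Nonempty (A i)) :
    ∃ (S : Type u) (inst : CommSemigroupWithZero S),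
      (∀ x : S, x * x = x) ∧
      Nonempty ((@zdvGraph S inst) ≃g SimpleGraph.completeMultipartiteGraph A) := by
  classical
  letI : LinearOrder (Σ i, A i) := @IsWellOrder.linearOrder _ WellOrderingRel inferInstance
  refine ⟨PSemi A, instPSemi, pmul_self, ?_⟩
  -- every nonzero element is a zero divisor
  have hzero : (0 : PSemi A) = none := rfl
  have hvert : ∀ a : Σ i, A i, (some a : PSemi A) ≠ 0 ∧
      ∃ y : PSemi A, y ≠ 0 ∧ (some a : PSemi A) * y = 0 := by
    intro a
    refine ⟨by simp [hzero], ?_⟩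
    -- pick an index different from a.1
    obtain ⟨j, hj⟩ : ∃ j : Fin r, j ≠ a.1 := by
      by_cases h : a.1 = ⟨0, by omega⟩
      · exact ⟨⟨1, by omega⟩, by simp [h, Fin.ext_iff]⟩
      · exact ⟨⟨0, by omega⟩, fun hh => h hh.symm⟩
    obtain ⟨b⟩ := hA j
    exact ⟨some ⟨j, b⟩, by simp [hzero], pmul_ne_fst (fun h => hj h.symm)⟩
  -- the equivalence from Σ i, A i to the vertex set
  let g : (Σ i, A i) ≃ {x : PSemi A // x ≠ 0 ∧ ∃ y : PSemi A, y ≠ 0 ∧ x * y = 0} :=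
    { toFun := fun a => ⟨some a, hvert a⟩
      invFun := fun x => x.1.get (Option.isSome_iff_ne_none.mpr x.2.1)
      left_inv := fun a => rfl
      right_inv := fun x => by
        ext1
        simp }
  refine ⟨(SimpleGraph.Iso.symm ⟨g, ?_⟩ : _)⟩
  intro a b
  show (zdvGraph (PSemi A)).Adj (g a) (g b) ↔ a.1 ≠ b.1
  constructor
  · rintro ⟨hne, hmul⟩
    intro h
    rw [show ((g a : _) : PSemi A) = some a from rfl,
      show ((g b : _) : PSemi A) = some b from rfl, pmul_eq_fst h, hzero] at hmul
    exact Option.some_ne_none _ hmul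
  · intro h
    refine ⟨?_, pmul_ne_fst h⟩
    intro hh
    apply h
    have : some a = some b := congrArg Subtype.val hh
    rw [Option.some_inj.mp this]
end

section
/- Let S be a Boolean semigroup with zero element 0 (a commutative semigroup with zero in which x·x = x for all x). For a nonzero x ∈ S, let N(x) = {z ∈ S : z ≠ 0, z ≠ x, z·x = 0} and S_x = {y ∈ S : y ≠ 0 and N(y) = N(x)}. Then S_x is a sub-semigroup of S and 0 ∉ S_x; in particular, y·z ∈ S_x (so y·z ≠ 0) for all y, z ∈ S_x. -/
universe u v w
/-- The neighbourhood of `x` in the zero-divisor graph of `S`. -/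
def Nset (S : Type u) [CommSemigroupWithZero S] (x : S) : Set S :=
  {z : S | z ≠ 0 ∧ z ≠ x ∧ z * x = 0}

/-- Theorem 3.2(1): in a Boolean semigroup `S`, for nonzero `x` the class
`S_x = {y ≠ 0 | N(y) = N(x)}` is a sub-semigroup of `S` not containing `0`. -/
theorem stmt13 (S : Type u) [CommSemigroupWithZero S] (hB : ∀ x : S, x * x = x)
    (x : S) (hx : x ≠ 0) :
    (∀ y ∈ {y : S | y ≠ 0 ∧ Nset S y = Nset S x},
      ∀ z ∈ {y : S | y ≠ 0 ∧ Nset S y = Nset S x},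
        y * z ∈ {y : S | y ≠ 0 ∧ Nset S y = Nset S x}) ∧
    (0 : S) ∉ {y : S | y ≠ 0 ∧ Nset S y = Nset S x} := by
  have zm : ∀ a : S, (0:S) * a = 0 := CommSemigroupWithZero.zero_mul'
  have mz : ∀ a : S, a * (0:S) = 0 := fun a => by rw [mul_comm]; exact zm a
  constructor
  · rintro y ⟨hy, hNy⟩ z ⟨hz, hNz⟩
    have hNyz : Nset S y = Nset S z := hNy.trans hNz.symm
    have hne : y * z ≠ 0 := by
      intro h0
      by_cases hyz : y = z
      · subst hyz; rw [hB] at h0; exact hy h0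
      · have hmem : y ∈ Nset S z := ⟨hy, hyz, h0⟩
        rw [← hNyz] at hmem
        exact hmem.2.1 rfl
    refine ⟨hne, ?_⟩
    rw [← hNy]
    ext w
    constructor
    · rintro ⟨hw0, hwyz, hwyz0⟩
      have hwy0 : w * y = 0 := by
        by_contra hwy
        have hwyz' : (w * y) * z = 0 := by rw [mul_assoc]; exact hwyz0
        by_cases h1 : w * y = z
        · rw [h1, hB] at hwyz'; exact hz hwyz'
        · have hmem : w * y ∈ Nset S z := ⟨hwy, h1, hwyz'⟩
          rw [← hNyz] at hmem
          have : (w * y) * y = w * y := by rw [mul_assoc, hB]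
          rw [hmem.2.2] at this
          exact hwy this.symm
      refine ⟨hw0, ?_, hwy0⟩
      intro hwy; subst hwy
      apply hne
      calc w * z = (w * w) * z := by rw [hB]
        _ = w * (w * z) := by rw [mul_assoc]
        _ = 0 := hwyz0
    · rintro ⟨hw0, hwy, hwy0⟩
      refine ⟨hw0, ?_, ?_⟩
      · intro h1
        apply hw0
        calc w = w * w := (hB w).symm
          _ = w * (y * z) := by rw [← h1]
          _ = (w * y) * z := by rw [mul_assoc]
          _ = 0 := by rw [hwy0]; exact zm z
      · calc w * (y * z) = (w * y) * z := by rw [mul_assoc]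
          _ = 0 := by rw [hwy0]; exact zm z
  · rintro ⟨h, -⟩; exact h rfl
end

section
/- Let m, n ≥ 2 and let G be a graph obtained from the complete bipartite graph K_{m,n} (with parts {a₁, …, a_m} and {b₁, …, b_n}) by attaching a nonempty set of new end vertices, each adjacent to exactly one vertex of the K_{m,n}. Then there is no Boolean semigroup S (commutative semigroup with zero in which x·x = x for all x) such that Γ(S) is isomorphic to G. -/
universe u v w
/-- The graph obtained from the complete bipartite graph `K_{m,n}` (with parts `Fin m`
and `Fin n`) by attaching, to each core vertex `c`, a set `E c` of new end vertices,
each adjacent exactly to `c`. -/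
def KmnE (m n : ℕ) (E : Fin m ⊕ Fin n → Type u) :
    SimpleGraph ((Fin m ⊕ Fin n) ⊕ (Σ c, E c)) where
  Adj x y :=
    match x, y with
    | Sum.inl (Sum.inl _), Sum.inl (Sum.inr _) => True
    | Sum.inl (Sum.inr _), Sum.inl (Sum.inl _) => True
    | Sum.inl (Sum.inl _), Sum.inl (Sum.inl _) => False
    | Sum.inl (Sum.inr _), Sum.inl (Sum.inr _) => False
    | Sum.inl c, Sum.inr p => c = p.1
    | Sum.inr p, Sum.inl c => c = p.1
    | Sum.inr _, Sum.inr _ => False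
  symm := by
    constructor
    rintro ((i | i) | p) ((j | j) | q) h
    · exact h
    · exact trivial
    · exact h
    · exact trivial
    · exact h
    · exact h
    · exact h
    · exact h
    · exact h.elim
  loopless := by
    constructor
    rintro ((i | i) | p) h
    · exact h
    · exact h
    · exact h


lemma kmn_key (m n : ℕ) (hm : 2 ≤ m) (hn : 2 ≤ n) (E : Fin m ⊕ Fin n → Type u)
    (p : Σ c, E c) :
    ∃ a b₁ b₂ : (Fin m ⊕ Fin n) ⊕ (Σ c, E c),
      ¬ (KmnE m n E).Adj (Sum.inr p) a ∧
      (KmnE m n E).Adj a b₁ ∧ (KmnE m n E).Adj a b₂ ∧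
      ∀ w, (KmnE m n E).Adj w (Sum.inl p.1) → (KmnE m n E).Adj w b₁ →
        (KmnE m n E).Adj w b₂ → False := by
  obtain ⟨c, ep⟩ := p
  rcases c with i | j
  · -- end vertex attached to an A-vertex `i`
    set i' : Fin m := if i = ⟨0, by omega⟩ then ⟨1, by omega⟩ else ⟨0, by omega⟩ with hi'
    have hii : (Sum.inl i' : Fin m ⊕ Fin n) ≠ Sum.inl i := by
      rw [hi']; split_ifs with h
      · simp [h]
      · intro hc; exact h (Sum.inl.inj hc).symm
    refine ⟨Sum.inl (Sum.inl i'), Sum.inl (Sum.inr ⟨0, by omega⟩),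
      Sum.inl (Sum.inr ⟨1, by omega⟩), ?_, trivial, trivial, ?_⟩
    · intro h
      exact hii h
    · rintro ((k | k) | q) h1 h2 h3
      · exact h1
      · exact h2
      · have e1 : (Sum.inr ⟨0, by omega⟩ : Fin m ⊕ Fin n) = q.1 := h2
        have e2 : (Sum.inr ⟨1, by omega⟩ : Fin m ⊕ Fin n) = q.1 := h3
        have : (⟨0, by omega⟩ : Fin n) = ⟨1, by omega⟩ := Sum.inr.inj (e1.trans e2.symm)
        exact absurd (congrArg Fin.val this) (by simp)
  · -- end vertex attached to a B-vertex `j`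
    set j' : Fin n := if j = ⟨0, by omega⟩ then ⟨1, by omega⟩ else ⟨0, by omega⟩ with hj'
    have hjj : (Sum.inr j' : Fin m ⊕ Fin n) ≠ Sum.inr j := by
      rw [hj']; split_ifs with h
      · simp [h]
      · intro hc; exact h (Sum.inr.inj hc).symm
    refine ⟨Sum.inl (Sum.inr j'), Sum.inl (Sum.inl ⟨0, by omega⟩),
      Sum.inl (Sum.inl ⟨1, by omega⟩), ?_, trivial, trivial, ?_⟩
    · intro h
      exact hjj h
    · rintro ((k | k) | q) h1 h2 h3
      · exact h2
      · exact h1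
      · have e1 : (Sum.inl ⟨0, by omega⟩ : Fin m ⊕ Fin n) = q.1 := h2
        have e2 : (Sum.inl ⟨1, by omega⟩ : Fin m ⊕ Fin n) = q.1 := h3
        have : (⟨0, by omega⟩ : Fin m) = ⟨1, by omega⟩ := Sum.inl.inj (e1.trans e2.symm)
        exact absurd (congrArg Fin.val this) (by simp)

/-- Corollary 3.5(2): the complete bipartite graph `K_{m,n}` (`m, n ≥ 2`) together with a
nonempty set of attached end vertices is not the zero-divisor graph of any Boolean
semigroup. -/
theorem stmt16 (m n : ℕ) (hm : 2 ≤ m) (hn : 2 ≤ n) (E : Fin m ⊕ Fin n → Type u)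
    (hE : ∃ c, Nonempty (E c)) :
    ¬ ∃ (S : Type u) (inst : CommSemigroupWithZero S),
        (∀ x : S, x * x = x) ∧ Nonempty ((@zdvGraph S inst) ≃g KmnE m n E) := by
  rintro ⟨S, inst, hB, ⟨φ⟩⟩
  obtain ⟨c₀, ⟨e₀⟩⟩ := hE
  obtain ⟨a, b₁, b₂, hna, hab₁, hab₂, hw⟩ := kmn_key m n hm hn E ⟨c₀, e₀⟩
  have zmul : ∀ x : S, (0:S) * x = 0 := CommSemigroupWithZero.zero_mul'
  have mulz : ∀ x : S, x * 0 = 0 := fun x => by rw [mul_comm]; exact zmul x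
  have adj_symm : ∀ x y, (KmnE m n E).Adj x y → (zdvGraph S).Adj (φ.symm x) (φ.symm y) :=
    fun x y h => φ.symm.map_adj_iff.mpr h
  have key : ∀ x y, (zdvGraph S).Adj x (φ.symm y) → (KmnE m n E).Adj (φ x) y := by
    intro x y h
    have h2 := φ.map_adj_iff.mpr h
    rwa [RelIso.apply_symm_apply] at h2
  set ee := φ.symm (Sum.inr ⟨c₀, e₀⟩) with hee
  set cc := φ.symm (Sum.inl ((⟨c₀, e₀⟩ : Σ c, E c).1)) with hcc
  set aa := φ.symm a with haa
  set bb₁ := φ.symm b₁ with hbb₁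
  set bb₂ := φ.symm b₂ with hbb₂
  have hec : (ee : S) * (cc : S) = 0 :=
    (adj_symm _ _ (show (KmnE m n E).Adj (Sum.inr ⟨c₀, e₀⟩) (Sum.inl c₀) from rfl)).2
  have hab1 : (aa : S) * (bb₁ : S) = 0 := (adj_symm _ _ hab₁).2
  have hab2 : (aa : S) * (bb₂ : S) = 0 := (adj_symm _ _ hab₂).2
  by_cases h0 : (ee : S) * (aa : S) = 0
  · -- then e is adjacent to a, contradicting the graph structure
    have hea : (ee : S) ≠ (aa : S) := by
      intro h
      rw [h, hB] at h0
      exact aa.prop.1 h0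
    have hadj : (zdvGraph S).Adj ee aa :=
      ⟨fun h => hea (congrArg Subtype.val h), h0⟩
    have g := key ee a hadj
    rw [hee, RelIso.apply_symm_apply] at g
    exact hna g
  · -- u = e*a is a vertex adjacent to c, b₁, b₂ : impossible
    have huc : (ee : S) * (aa : S) * (cc : S) = 0 := by
      rw [mul_comm (ee : S) (aa : S), mul_assoc, hec, mulz]
    have hub1 : (ee : S) * (aa : S) * (bb₁ : S) = 0 := by
      rw [mul_assoc, hab1, mulz]
    have hub2 : (ee : S) * (aa : S) * (bb₂ : S) = 0 := by
      rw [mul_assoc, hab2, mulz]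
    have hne : ∀ z : S, z ≠ 0 → (ee : S) * (aa : S) * z = 0 → (ee : S) * (aa : S) ≠ z := by
      intro z hz hz0 h
      rw [h, hB] at hz0
      exact hz hz0
    set uu : {x : S // x ≠ 0 ∧ ∃ y : S, y ≠ 0 ∧ x * y = 0} :=
      ⟨(ee : S) * (aa : S), h0, cc, cc.prop.1, huc⟩ with huu
    have adj1 : (zdvGraph S).Adj uu cc :=
      ⟨fun h => hne _ cc.prop.1 huc (congrArg Subtype.val h), huc⟩
    have adj2 : (zdvGraph S).Adj uu bb₁ :=
      ⟨fun h => hne _ bb₁.prop.1 hub1 (congrArg Subtype.val h), hub1⟩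
    have adj3 : (zdvGraph S).Adj uu bb₂ :=
      ⟨fun h => hne _ bb₂.prop.1 hub2 (congrArg Subtype.val h), hub2⟩
    have g1 := key uu (Sum.inl c₀) (hcc ▸ adj1)
    have g2 := key uu b₁ (hbb₁ ▸ adj2)
    have g3 := key uu b₂ (hbb₂ ▸ adj3)
    exact hw (φ uu) g1 g2 g3
end

section
/- Let m, n ≥ 1 and let G be the two-star graph with vertex set {x₁, …, x_m} ∪ {a, b} ∪ {y₁, …, y_n}, whose edges are x_i–a for all i, a–b, and b–y_j for all j (so G is a two-star graph that is not a star graph). Then there is no Boolean semigroup S (commutative semigroup with zero in which x·x = x for all x) such that Γ(S) is isomorphic to G. -/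
universe u v w
/-- The two-star graph: centres `a = Sum.inr (Sum.inl 0)` and `b = Sum.inr (Sum.inl 1)`
joined by an edge, with end vertices `x₁, …, x_m` (the `Sum.inl` vertices) adjacent to `a`
and end vertices `y₁, …, y_n` (the `Sum.inr (Sum.inr _)` vertices) adjacent to `b`. -/
def TwoStar (m n : ℕ) : SimpleGraph (Fin m ⊕ Fin 2 ⊕ Fin n) where
  Adj x y :=
    match x, y with
    | Sum.inl _, Sum.inr (Sum.inl a) => a = 0
    | Sum.inr (Sum.inl a), Sum.inl _ => a = 0
    | Sum.inr (Sum.inl a), Sum.inr (Sum.inl b) => a ≠ b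
    | Sum.inr (Sum.inl a), Sum.inr (Sum.inr _) => a = 1
    | Sum.inr (Sum.inr _), Sum.inr (Sum.inl a) => a = 1
    | _, _ => False
  symm := by
    constructor
    rintro (i | (i | i)) (j | (j | j)) h
    · exact h.elim
    · exact h
    · exact h.elim
    · exact h
    · exact h.symm
    · exact h
    · exact h.elim
    · exact h
    · exact h.elim
  loopless := by
    constructor
    rintro (i | (i | i)) h
    · exact h
    · exact h rfl
    · exact h

/-- Corollary 3.5(3): a two-star graph which is not a star graph (`m, n ≥ 1`) is not the
zero-divisor graph of any Boolean semigroup. -/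
theorem stmt17 (m n : ℕ) (hm : 1 ≤ m) (hn : 1 ≤ n) :
    ¬ ∃ (S : Type u) (inst : CommSemigroupWithZero S),
        (∀ x : S, x * x = x) ∧ Nonempty ((@zdvGraph S inst) ≃g TwoStar m n) := by
  rintro ⟨S, inst, hB, ⟨f⟩⟩
  have hz0 : ∀ s : S, (0 : S) * s = 0 := CommSemigroupWithZero.zero_mul'
  have hz : ∀ s : S, s * 0 = 0 := fun s => by rw [mul_comm]; exact hz0 s
  set g := f.symm with hg
  set va := g (Sum.inr (Sum.inl 0)) with hva
  set vb := g (Sum.inr (Sum.inl 1)) with hvb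
  set vx := g (Sum.inl ⟨0, hm⟩) with hvx
  set vy := g (Sum.inr (Sum.inr ⟨0, hn⟩)) with hvy
  have hfg : ∀ u, f (g u) = u := fun u => f.apply_symm_apply u
  have fwd : ∀ (p q : {x : S // x ≠ 0 ∧ ∃ y : S, y ≠ 0 ∧ x * y = 0}),
      p ≠ q → (p : S) * q = 0 → (TwoStar m n).Adj (f p) (f q) :=
    fun p q h1 h2 => f.map_adj_iff.mpr ⟨h1, h2⟩
  have bwd : ∀ u v, (TwoStar m n).Adj u v → ((g u) : S) * (g v) = 0 :=
    fun u v h => (f.symm.map_adj_iff.mpr h).2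
  -- edges of the two-star
  have hXA : (vx : S) * va = 0 := bwd _ _ rfl
  have hYB : (vy : S) * vb = 0 := bwd _ _ rfl
  -- v := X * Y is nonzero
  have hv0 : (vx : S) * vy ≠ 0 := by
    intro h0
    have hne : vx ≠ vy := by
      intro h
      have := congrArg f h
      rw [hfg, hfg] at this
      exact absurd this (by simp)
    have := fwd vx vy hne h0
    rw [hfg, hfg] at this
    exact this
  have hvA : ((vx : S) * vy) * va = 0 := by
    rw [mul_comm (vx : S) (vy : S), mul_assoc, hXA, hz]
  have hvB : ((vx : S) * vy) * vb = 0 := by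
    rw [mul_assoc, hYB, hz]
  set vv : {x : S // x ≠ 0 ∧ ∃ y : S, y ≠ 0 ∧ x * y = 0} :=
    ⟨(vx : S) * vy, hv0, (va : S), va.2.1, hvA⟩ with hvv
  have hvva : vv ≠ va := by
    intro h
    have hval : (vx : S) * vy = (va : S) := congrArg Subtype.val h
    rw [hval] at hvA
    rw [hB (va : S)] at hvA
    exact va.2.1 hvA
  have hvvb : vv ≠ vb := by
    intro h
    have hval : (vx : S) * vy = (vb : S) := congrArg Subtype.val h
    rw [hval] at hvB
    rw [hB (vb : S)] at hvB
    exact vb.2.1 hvB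
  have h1 : (TwoStar m n).Adj (f vv) (Sum.inr (Sum.inl 0)) := by
    have := fwd vv va hvva hvA
    rwa [hfg] at this
  have h2 : (TwoStar m n).Adj (f vv) (Sum.inr (Sum.inl 1)) := by
    have := fwd vv vb hvvb hvB
    rwa [hfg] at this
  rcases hc : f vv with i | w | j
  · rw [hc] at h2
    have h2' : (1 : Fin 2) = 0 := h2
    exact absurd h2' (by decide)
  · rw [hc] at h1 h2
    have hw0 : w ≠ 0 := h1
    have hw1 : w ≠ 1 := h2
    fin_cases w
    · exact hw0 rfl
    · exact hw1 rfl
  · rw [hc] at h1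
    have h1' : (0 : Fin 2) = 1 := h1
    exact absurd h1' (by decide)
end
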